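/- For the diffusion x(t) = e^{-tL}δ_{u0} on the star graph on N vertices with u0 the center, x(t) = [(1 + e^{-2t})/2, (1 - e^{-2t})/(2√(N-1)), …]^T, and its spreads Δ_s²(x(t)) = 2e^{-4t}/(1 + e^{-4t}) and Δ_{g,u0}²(x(t)) = (1 - e^{-2t})²/(2(1 + e^{-4t})) satisfy (Δ_s² - 1)² + (2Δ_{g,u0}² - 1)² = 1, i.e., the diffusion exactly achieves the star-graph uncertainty curve for all t ≥ 0. -/

import Mathlib

open Matrix BigOperators Finset Real

attribute [local instance] Matrix.linftyOpNormedAddCommGroup Matrix.linftyOpNormedRing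
  Matrix.linftyOpNormedAlgebra

attribute [-simp] Fin.val_eq_zero_iff

private lemma exp_mulVec_eigen {N : ℕ} (M : Matrix (Fin N) (Fin N) ℝ) (c : ℝ) (v : Fin N → ℝ)
    (h : M *ᵥ v = c • v) :
    (NormedSpace.exp M) *ᵥ v = Real.exp c • v := by
  have hpow : ∀ n : ℕ, (M ^ n) *ᵥ v = (c ^ n) • v := by
    intro n; induction n with
    | zero => simp
    | succ n ih =>
      rw [pow_succ, ← Matrix.mulVec_mulVec, h, Matrix.mulVec_smul, ih, smul_smul, pow_succ]
      rw [mul_comm]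
  let f : Matrix (Fin N) (Fin N) ℝ →L[ℝ] (Fin N → ℝ) :=
    LinearMap.toContinuousLinearMap
      { toFun := fun A => A *ᵥ v
        map_add' := fun A B => Matrix.add_mulVec A B v
        map_smul' := fun r A => by simp [Matrix.smul_mulVec] }
  have hf : ∀ A, f A = A *ᵥ v := fun A => rfl
  have hsum : Summable (fun n : ℕ => ((n.factorial : ℝ))⁻¹ • M ^ n) :=
    NormedSpace.expSeries_summable' (𝕂 := ℝ) M
  have hsumc : Summable (fun n : ℕ => ((n.factorial : ℝ))⁻¹ • c ^ n) :=
    NormedSpace.expSeries_summable' (𝕂 := ℝ) c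
  calc (NormedSpace.exp M) *ᵥ v = f (∑' n : ℕ, ((n.factorial : ℝ))⁻¹ • M ^ n) := by
        rw [hf, NormedSpace.exp_eq_tsum ℝ]
    _ = ∑' n : ℕ, ((n.factorial : ℝ))⁻¹ • ((M ^ n) *ᵥ v) := by
        rw [f.map_tsum hsum]; simp only [hf, Matrix.smul_mulVec]
    _ = ∑' n : ℕ, (((n.factorial : ℝ))⁻¹ • c ^ n) • v := by
        congr 1; funext n; rw [hpow n, smul_smul, smul_eq_mul]
    _ = (∑' n : ℕ, ((n.factorial : ℝ))⁻¹ • c ^ n) • v := hsumc.tsum_smul_const v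
    _ = Real.exp c • v := by
        rw [Real.exp_eq_exp_ℝ, NormedSpace.exp_eq_tsum ℝ]

private lemma fin_val_zero_iff {N : ℕ} [NeZero N] (j : Fin N) : (j : ℕ) = 0 ↔ j = 0 :=
  ⟨fun h => Fin.ext (by simp [h]), fun h => by simp [h]⟩

private lemma sum_fin_ite {N : ℕ} [NeZero N] (A B : ℝ) :
    ∑ j : Fin N, (if (j : ℕ) = 0 then A else B) = A + ((N : ℝ) - 1) * B := by
  have h : ∀ j : Fin N, (if (j : ℕ) = 0 then A else B)
      = B + (if j = 0 then A - B else 0) := by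
    intro j
    rcases eq_or_ne j 0 with h | h
    · simp [h]
    · simp [h, (fin_val_zero_iff j).not.mpr h]
  rw [Finset.sum_congr rfl (fun j _ => h j)]
  rw [Finset.sum_add_distrib, Finset.sum_const, Finset.sum_ite_eq' Finset.univ (0 : Fin N)]
  simp only [Finset.card_univ, Fintype.card_fin, Finset.mem_univ, if_true, nsmul_eq_mul]
  ring

/-- For the diffusion `x(t) = e^{-tL} δ_{u0}` on the star graph on `N ≥ 3` vertices
with `u0` the center (vertex 0), `x(t) = [(1+e^{-2t})/2, (1-e^{-2t})/(2√(N-1)), …]`,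
the spreads are `Δs = 2e^{-4t}/(1+e^{-4t})` and `Δg = (1-e^{-2t})²/(2(1+e^{-4t}))`, and
they satisfy `(Δs-1)² + (2Δg-1)² = 1`, i.e. the diffusion exactly achieves the
star-graph uncertainty curve for all `t ≥ 0`. -/
theorem stmt17 {N : ℕ} (hN : 3 ≤ N)
    (L : Matrix (Fin N) (Fin N) ℝ)
    (hL : L = fun (i j : Fin N) => if i = j then (1 : ℝ)
      else if (i : ℕ) = 0 ∨ (j : ℕ) = 0 then -(1 / Real.sqrt ((N : ℝ) - 1)) else 0)
    (P2 : Matrix (Fin N) (Fin N) ℝ)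
    (hP2 : P2 = Matrix.diagonal (fun i : Fin N => if (i : ℕ) = 0 then (0 : ℝ) else 1))
    (u0 : Fin N) (hu0 : (u0 : ℕ) = 0)
    (δ : Fin N → ℝ) (hδ : δ = Pi.single u0 1)
    (x : ℝ → Fin N → ℝ)
    (hx : ∀ t : ℝ, x t = (NormedSpace.exp ((-t) • L)) *ᵥ δ) :
    ∀ t : ℝ, 0 ≤ t →
      (x t = fun i : Fin N => if (i : ℕ) = 0
          then (1 + Real.exp (-2 * t)) / 2
          else (1 - Real.exp (-2 * t)) / (2 * Real.sqrt ((N : ℝ) - 1))) ∧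
      (x t ⬝ᵥ (L *ᵥ x t)) / (∑ i, (x t i) ^ 2) =
        2 * Real.exp (-4 * t) / (1 + Real.exp (-4 * t)) ∧
      (x t ⬝ᵥ (P2 *ᵥ x t)) / (∑ i, (x t i) ^ 2) =
        (1 - Real.exp (-2 * t)) ^ 2 / (2 * (1 + Real.exp (-4 * t))) ∧
      (let s : ℝ := (x t ⬝ᵥ (L *ᵥ x t)) / (∑ i, (x t i) ^ 2)
       let g : ℝ := (x t ⬝ᵥ (P2 *ᵥ x t)) / (∑ i, (x t i) ^ 2)
       (s - 1) ^ 2 + (2 * g - 1) ^ 2 = 1) := by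
  haveI : NeZero N := ⟨by omega⟩
  have hN3 : (3 : ℝ) ≤ (N : ℝ) := by exact_mod_cast hN
  set s : ℝ := Real.sqrt ((N : ℝ) - 1) with hsdef
  have hs2 : s ^ 2 = (N : ℝ) - 1 := Real.sq_sqrt (by linarith)
  have hs0 : s ≠ 0 := by
    intro h
    rw [h] at hs2; simp at hs2; linarith
  -- eigenvectors
  set w : Fin N → ℝ := (fun i => if (i : ℕ) = 0 then 1 else 1 / s) with hwdef
  set v : Fin N → ℝ := (fun i => if (i : ℕ) = 0 then 1 else -(1 / s)) with hvdef
  have hw0 : ∀ i : Fin N, (i : ℕ) = 0 → w i = 1 := fun i hi => by simp [hwdef, hi]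
  have hLw : L *ᵥ w = 0 := by
    funext i
    simp only [Matrix.mulVec, dotProduct, hL, Pi.zero_apply]
    rcases eq_or_ne (i : ℕ) 0 with hi | hi
    · have hterm : ∀ j : Fin N,
          (if i = j then (1 : ℝ) else if (i : ℕ) = 0 ∨ (j : ℕ) = 0 then -(1 / s) else 0) * w j
          = if (j : ℕ) = 0 then 1 else -(1 / s) * (1 / s) := by
        intro j
        rcases eq_or_ne (j : ℕ) 0 with hj | hj
        · have : i = j := Fin.ext (hi.trans hj.symm)
          simp [this, hj, hwdef]
        · have : i ≠ j := fun h => hj (h ▸ hi)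
          simp [this, hi, hj, hwdef]
      rw [Finset.sum_congr rfl (fun j _ => hterm j), sum_fin_ite]
      field_simp
      nlinarith [hs2]
    · have hterm : ∀ j : Fin N,
          (if i = j then (1 : ℝ) else if (i : ℕ) = 0 ∨ (j : ℕ) = 0 then -(1 / s) else 0) * w j
          = (if j = i then 1 / s else 0) + (if (j : ℕ) = 0 then -(1 / s) else 0) := by
        intro j
        rcases eq_or_ne j i with hj | hj
        · subst hj; simp [hi, hwdef]
        · rcases eq_or_ne (j : ℕ) 0 with h0 | h0
          · simp [hj, Ne.symm hj, hi, h0, hwdef]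
          · simp [hj, Ne.symm hj, hi, h0, hwdef]
      rw [Finset.sum_congr rfl (fun j _ => hterm j), Finset.sum_add_distrib,
        Finset.sum_ite_eq' Finset.univ i]
      have : ∀ j : Fin N, (if (j : ℕ) = 0 then -(1 / s) else (0:ℝ))
          = if j = 0 then -(1/s) else 0 := by
        intro j; simp [fin_val_zero_iff]
      rw [Finset.sum_congr rfl (fun j _ => this j), Finset.sum_ite_eq' Finset.univ (0 : Fin N)]
      simp
  have hLv : L *ᵥ v = (2 : ℝ) • v := by
    funext i
    simp only [Matrix.mulVec, dotProduct, hL, Pi.smul_apply, smul_eq_mul]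
    rcases eq_or_ne (i : ℕ) 0 with hi | hi
    · have hterm : ∀ j : Fin N,
          (if i = j then (1 : ℝ) else if (i : ℕ) = 0 ∨ (j : ℕ) = 0 then -(1 / s) else 0) * v j
          = if (j : ℕ) = 0 then 1 else -(1 / s) * -(1 / s) := by
        intro j
        rcases eq_or_ne (j : ℕ) 0 with hj | hj
        · have : i = j := Fin.ext (hi.trans hj.symm)
          simp [this, hj, hvdef]
        · have : i ≠ j := fun h => hj (h ▸ hi)
          simp [this, hi, hj, hvdef]
      rw [Finset.sum_congr rfl (fun j _ => hterm j), sum_fin_ite]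
      have hvi : v i = 1 := by simp [hvdef, hi]
      rw [hvi]
      field_simp
      nlinarith [hs2]
    · have hterm : ∀ j : Fin N,
          (if i = j then (1 : ℝ) else if (i : ℕ) = 0 ∨ (j : ℕ) = 0 then -(1 / s) else 0) * v j
          = (if j = i then -(1 / s) else 0) + (if (j : ℕ) = 0 then -(1 / s) else 0) := by
        intro j
        rcases eq_or_ne j i with hj | hj
        · subst hj; simp [hi, hvdef]
        · rcases eq_or_ne (j : ℕ) 0 with h0 | h0
          · simp [hj, Ne.symm hj, hi, h0, hvdef]
          · simp [hj, Ne.symm hj, hi, h0, hvdef]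
      rw [Finset.sum_congr rfl (fun j _ => hterm j), Finset.sum_add_distrib,
        Finset.sum_ite_eq' Finset.univ i]
      have : ∀ j : Fin N, (if (j : ℕ) = 0 then -(1 / s) else (0:ℝ))
          = if j = 0 then -(1/s) else 0 := by
        intro j; simp [fin_val_zero_iff]
      rw [Finset.sum_congr rfl (fun j _ => this j), Finset.sum_ite_eq' Finset.univ (0 : Fin N)]
      have hvi : v i = -(1 / s) := by simp [hvdef, hi]
      rw [hvi]
      simp
      ring
  have hδ' : δ = (1 / 2 : ℝ) • w + (1 / 2 : ℝ) • v := by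
    funext i
    rcases eq_or_ne (i : ℕ) 0 with hi | hi
    · have : i = u0 := Fin.ext (hi.trans hu0.symm)
      simp [hδ, this, hi, hu0, hwdef, hvdef]
      norm_num
    · have hne : i ≠ u0 := fun h => hi (by rw [h, hu0])
      simp [hδ, Pi.single_eq_of_ne hne, hi, hu0, hwdef, hvdef]
  intro t ht
  set e : ℝ := Real.exp (-2 * t) with hedef
  have he2 : e ^ 2 = Real.exp (-4 * t) := by
    rw [hedef, sq, ← Real.exp_add]
    ring_nf
  have hepos : 0 < e := Real.exp_pos _
  -- the explicit formula
  have hxwv : x t = (1 / 2 : ℝ) • w + (e / 2 : ℝ) • v := by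
    rw [hx t, hδ', Matrix.mulVec_add, Matrix.mulVec_smul, Matrix.mulVec_smul]
    have e1 : ((-t) • L) *ᵥ w = (0 : ℝ) • w := by
      rw [Matrix.smul_mulVec, hLw]; simp
    have e2 : ((-t) • L) *ᵥ v = (-2 * t) • v := by
      rw [Matrix.smul_mulVec, hLv, smul_smul]; ring_nf
    rw [exp_mulVec_eigen _ _ _ e1, exp_mulVec_eigen _ _ _ e2]
    rw [Real.exp_zero, ← hedef]
    funext i
    simp only [Pi.add_apply, Pi.smul_apply, smul_eq_mul]
    ring
  have hxt : x t = fun i : Fin N => if (i : ℕ) = 0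
      then (1 + e) / 2 else (1 - e) / (2 * s) := by
    rw [hxwv]
    funext i
    rcases eq_or_ne (i : ℕ) 0 with hi | hi
    · simp [hi, hwdef, hvdef]
      ring
    · simp [hi, hwdef, hvdef]
      field_simp
      ring
  -- the sum of squares
  have hS : ∑ i, (x t i) ^ 2 = (1 + e ^ 2) / 2 := by
    rw [hxt]
    have : ∀ i : Fin N, (if (i : ℕ) = 0 then (1 + e) / 2 else (1 - e) / (2 * s)) ^ 2
        = if (i : ℕ) = 0 then ((1 + e) / 2) ^ 2 else ((1 - e) / (2 * s)) ^ 2 := by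
      intro i; split_ifs <;> rfl
    rw [Finset.sum_congr rfl (fun i _ => this i), sum_fin_ite, ← hs2]
    field_simp
    ring
  have hSpos : (0 : ℝ) < (1 + e ^ 2) / 2 := by positivity
  have h1e2 : (1 : ℝ) + Real.exp (-4 * t) ≠ 0 := by positivity
  -- numerator 1
  have hnum1 : x t ⬝ᵥ (L *ᵥ x t) = e ^ 2 := by
    have hLx : L *ᵥ x t = e • v := by
      rw [hxwv, Matrix.mulVec_add, Matrix.mulVec_smul, Matrix.mulVec_smul, hLw, hLv,
        smul_smul, smul_zero, zero_add]
      congr 1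
      ring
    rw [hLx, dotProduct_smul, hxt, smul_eq_mul]
    have : ∀ i : Fin N, (if (i : ℕ) = 0 then (1 + e) / 2 else (1 - e) / (2 * s)) * v i
        = if (i : ℕ) = 0 then (1 + e) / 2 else (1 - e) / (2 * s) * -(1 / s) := by
      intro i
      rcases eq_or_ne (i : ℕ) 0 with hi | hi <;> simp [hi, hvdef]
    rw [show (fun i : Fin N => if (i : ℕ) = 0 then (1 + e) / 2 else (1 - e) / (2 * s)) ⬝ᵥ v
        = ∑ i : Fin N, (if (i : ℕ) = 0 then (1 + e) / 2 else (1 - e) / (2 * s)) * v i from rfl]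
    rw [Finset.sum_congr rfl (fun i _ => this i), sum_fin_ite, ← hs2]
    field_simp
    ring
  -- numerator 2
  have hnum2 : x t ⬝ᵥ (P2 *ᵥ x t) = (1 - e) ^ 2 / 4 := by
    have hterm : ∀ i : Fin N, x t i * (P2 *ᵥ x t) i
        = if (i : ℕ) = 0 then 0 else ((1 - e) / (2 * s)) * ((1 - e) / (2 * s)) := by
      intro i
      rw [hP2, Matrix.mulVec_diagonal, hxt]
      rcases eq_or_ne (i : ℕ) 0 with hi | hi <;> simp [hi] <;> ring
    rw [show x t ⬝ᵥ (P2 *ᵥ x t) = ∑ i : Fin N, x t i * (P2 *ᵥ x t) i from rfl]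
    rw [Finset.sum_congr rfl (fun i _ => hterm i), sum_fin_ite, ← hs2]
    field_simp
    ring
  refine ⟨by rw [hxt], ?_, ?_, ?_⟩
  · rw [hnum1, hS, ← he2]
    field_simp
  · rw [hnum2, hS, ← he2]
    field_simp
    ring
  · intro sval gval
    show (sval - 1) ^ 2 + (2 * gval - 1) ^ 2 = 1
    have hsv : sval = 2 * e ^ 2 / (1 + e ^ 2) := by
      show (x t ⬝ᵥ (L *ᵥ x t)) / (∑ i, (x t i) ^ 2) = _
      rw [hnum1, hS]; field_simp
    have hgv : gval = (1 - e) ^ 2 / (2 * (1 + e ^ 2)) := by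
      show (x t ⬝ᵥ (P2 *ᵥ x t)) / (∑ i, (x t i) ^ 2) = _
      rw [hnum2, hS]; field_simp; ring
    rw [hsv, hgv]
    have h12 : (1 : ℝ) + e ^ 2 ≠ 0 := by positivity
    field_simp
    ring
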